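/- The Tanner graph of the parity-check matrix of any (possibly shortened) array code with modulus q contains no cycle of length four; equivalently, its girth is at least six. -/

import Mathlib

/-- The Tanner graph of a (possibly shortened) array code with modulus `q`,
block-row labels `a 0, …, a (r-1)` (elements of `ZMod q`), and retained
block-column label set `S ⊆ ZMod q`.  Row vertices are pairs `(i, x)`
(block-row `i`, row `x` within the block); column vertices are pairs `(j, y)`
with `j ∈ S` (block-column labeled `j`, column `y` within the block).
A row `(i, x)` is adjacent to a column `(j, y)` iff the corresponding entry of
the parity-check matrix, i.e. entry `(x, y)` of `P ^ (a i * j)`, equals `1`,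
which happens iff `y = x + a i * j`. -/
def tannerGraph (q r : ℕ) (a : Fin r → ZMod q) (S : Finset (ZMod q)) :
    SimpleGraph ((Fin r × ZMod q) ⊕ ({j // j ∈ S} × ZMod q)) where
  Adj u v :=
    match u, v with
    | Sum.inl (i, x), Sum.inr (j, y) => y = x + a i * (j : ZMod q)
    | Sum.inr (j, y), Sum.inl (i, x) => y = x + a i * (j : ZMod q)
    | _, _ => False
  symm := by
    constructor
    rintro (⟨i, x⟩ | ⟨j, y⟩) (⟨i', x'⟩ | ⟨j', y'⟩) h <;> simp_all
  loopless := by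
    constructor
    rintro (⟨i, x⟩ | ⟨j, y⟩) h <;> simp_all

section aux
variable {q r : ℕ} {a : Fin r → ZMod q} {S : Finset (ZMod q)}

private lemma side_ne {u v} (h : (tannerGraph q r a S).Adj u v) :
    u.isLeft ≠ v.isLeft := by
  rcases u with (⟨i, x⟩ | ⟨j, y⟩) <;> rcases v with (⟨i', x'⟩ | ⟨j', y'⟩) <;>
    simp_all [tannerGraph]

private lemma walk_parity : ∀ {u v} (p : (tannerGraph q r a S).Walk u v),
    Even p.length ↔ (u.isLeft = v.isLeft)
  | _, _, .nil => by simp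
  | u, v, .cons h p => by
    have h1 := side_ne h
    have h2 := walk_parity p
    rw [SimpleGraph.Walk.length_cons, Nat.even_add_one, not_iff_comm, h2]
    revert h1 h2
    cases u.isLeft <;> cases v.isLeft <;> simp <;> exact fun h _ => h

private lemma exists_of_length_four {V : Type*} {G : SimpleGraph V} {v : V}
    (c : G.Walk v v) (h : c.length = 4) :
    ∃ w1 w2 w3, ∃ (h1 : G.Adj v w1) (h2 : G.Adj w1 w2) (h3 : G.Adj w2 w3)
      (h4 : G.Adj w3 v),
      c = .cons h1 (.cons h2 (.cons h3 (.cons h4 .nil))) := by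
  cases c with
  | nil => simp at h
  | cons h1 p =>
    cases p with
    | nil => simp at h
    | cons h2 p =>
      cases p with
      | nil => simp at h
      | cons h3 p =>
        cases p with
        | nil => simp at h
        | cons h4 p =>
          cases p with
          | nil => exact ⟨_, _, _, h1, h2, h3, h4, rfl⟩
          | cons h5 p => simp [SimpleGraph.Walk.length_cons] at h

end aux

/-- The Tanner graph of the parity-check matrix of any
(possibly shortened) array code with modulus `q` (an odd prime) contains no
cycle of length four; equivalently, its girth is at least six. -/
theorem arrayCode_no_four_cycle (q r : ℕ) (hq : q.Prime) (hqodd : Odd q)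
    (a : Fin r → ZMod q) (ha : Function.Injective a) (S : Finset (ZMod q)) :
    (¬ ∃ (v : (Fin r × ZMod q) ⊕ ({j // j ∈ S} × ZMod q))
        (c : (tannerGraph q r a S).Walk v v), c.IsCycle ∧ c.length = 4) ∧
      6 ≤ (tannerGraph q r a S).egirth := by
  haveI : Fact q.Prime := ⟨hq⟩
  have key : ¬ ∃ (v : (Fin r × ZMod q) ⊕ ({j // j ∈ S} × ZMod q))
      (c : (tannerGraph q r a S).Walk v v), c.IsCycle ∧ c.length = 4 := by
    rintro ⟨v, c, hc, hlen⟩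
    obtain ⟨w1, w2, w3, h1, h2, h3, h4, rfl⟩ := exists_of_length_four c hlen
    have hnd := hc.support_nodup
    simp [SimpleGraph.Walk.support_cons, List.nodup_cons] at hnd
    -- hnd gives distinctness facts
    obtain ⟨⟨hw12, hw13, hw1v⟩, ⟨hw23, hw2v⟩, hw3v⟩ := hnd
    rcases v with (⟨i, x⟩ | ⟨j, y⟩)
    · rcases w1 with (⟨i1, x1⟩ | ⟨j1, y1⟩)
      · exact (side_ne h1 rfl)
      rcases w2 with (⟨i2, x2⟩ | ⟨j2, y2⟩)
      swap
      · exact (side_ne h2 rfl)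
      rcases w3 with (⟨i3, x3⟩ | ⟨j3, y3⟩)
      · exact (side_ne h3 rfl)
      simp only [tannerGraph] at h1 h2 h3 h4
      have hmul : (a i - a i2) * ((j1 : ZMod q) - (j3 : ZMod q)) = 0 := by
        linear_combination h2 - h1 + h4 - h3
      rcases mul_eq_zero.mp hmul with hA | hB
      · have hii : i = i2 := ha (sub_eq_zero.mp hA)
        subst hii
        have hx : x = x2 := by linear_combination h2 - h1
        exact hw2v (by rw [hx])
      · have hj : j1 = j3 := Subtype.ext (sub_eq_zero.mp hB)
        have hy : y1 = y3 := by
          rw [h1, h4, hj]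
        exact hw13 (by rw [hj, hy])
    · rcases w1 with (⟨i1, x1⟩ | ⟨j1, y1⟩)
      swap
      · exact (side_ne h1 rfl)
      rcases w2 with (⟨i2, x2⟩ | ⟨j2, y2⟩)
      · exact (side_ne h2 rfl)
      rcases w3 with (⟨i3, x3⟩ | ⟨j3, y3⟩)
      swap
      · exact (side_ne h3 rfl)
      simp only [tannerGraph] at h1 h2 h3 h4
      have hmul : (a i1 - a i3) * ((j : ZMod q) - (j2 : ZMod q)) = 0 := by
        linear_combination h2 - h1 + h4 - h3
      rcases mul_eq_zero.mp hmul with hA | hB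
      · have hii : i1 = i3 := ha (sub_eq_zero.mp hA)
        subst hii
        have hx : x1 = x3 := by linear_combination h3 - h2
        exact hw13 (by rw [hx])
      · have hj : j = j2 := Subtype.ext (sub_eq_zero.mp hB)
        have hy : y = y2 := by rw [h1, h2, hj]
        exact hw2v (by rw [hj, hy])
  refine ⟨key, ?_⟩
  rw [SimpleGraph.le_egirth]
  intro v w hw
  have h3 := hw.three_le_length
  have heven : Even w.length := (walk_parity w).mpr rfl
  have h4 : w.length ≠ 4 := fun h => key ⟨v, w, hw, h⟩
  have : 6 ≤ w.length := by
    rcases heven with ⟨k, hk⟩; omega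
  exact_mod_cast Nat.cast_le.mpr this
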